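/- Assume k is a nontrivial commutative ring and a + b > n. Then the family of linear maps (T_P), indexed by the partition diagrams P of type (a,b), is linearly dependent over k; equivalently, the k-linear map from the free k-module on the set of partition diagrams of type (a,b) to Hom_k(V^{⊗a}, V^{⊗b}) sending P to T_P is not injective. -/

import Mathlib

open scoped Classical

/-- A partition diagram of type `(a,b)`: a set partition of `Fin a ⊕ Fin b`
into nonempty blocks. -/
abbrev PartitionDiagram (a b : ℕ) :=
  Finpartition (Finset.univ : Finset (Fin a ⊕ Fin b))

/-- `Sum.elim f g` is constant on every block of `P`. -/
def Compatible {n a b : ℕ} (P : PartitionDiagram a b)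
    (f : Fin a → Fin n) (g : Fin b → Fin n) : Prop :=
  ∀ B ∈ P.parts, ∀ x ∈ B, ∀ y ∈ B, Sum.elim f g x = Sum.elim f g y

/-- The linear map `T_P : V^{⊗a} → V^{⊗b}` associated to a partition diagram `P`,
where `V^{⊗a}` is modelled as the free module on `Fin a → Fin n`, with basis vector
at `f` corresponding to `e_{f(1)} ⊗ ⋯ ⊗ e_{f(a)}`. -/
noncomputable def TP (k : Type*) [CommRing k] (n : ℕ) {a b : ℕ}
    (P : PartitionDiagram a b) :
    ((Fin a → Fin n) → k) →ₗ[k] ((Fin b → Fin n) → k) where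
  toFun x g := ∑ f : Fin a → Fin n, if Compatible P f g then x f else 0
  map_add' x y := by
    funext g
    simp only [Pi.add_apply]
    rw [← Finset.sum_add_distrib]
    exact Finset.sum_congr rfl fun f _ => by split <;> simp
  map_smul' c x := by
    funext g
    simp only [Pi.smul_apply, smul_eq_mul, RingHom.id_apply]
    rw [Finset.mul_sum]
    exact Finset.sum_congr rfl fun f _ => by split <;> simp

/-- The (diagonal) action of `σ ∈ S_n` on `V^{⊗a}`: on basis vectors it sends
`e_{f(1)} ⊗ ⋯ ⊗ e_{f(a)}` to `e_{σ(f(1))} ⊗ ⋯ ⊗ e_{σ(f(a))}`. -/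
def permMap (k : Type*) [CommRing k] {n a : ℕ} (σ : Equiv.Perm (Fin n)) :
    ((Fin a → Fin n) → k) →ₗ[k] ((Fin a → Fin n) → k) where
  toFun x f := x fun i => σ⁻¹ (f i)
  map_add' _ _ := rfl
  map_smul' _ _ := rfl


open Finset IncidenceAlgebra

/-- if `k` is a nontrivial commutative ring and `a + b > n`, the family
`(T_P)` indexed by partition diagrams of type `(a,b)` is linearly dependent. -/
theorem stmt9 (k : Type*) [CommRing k] [Nontrivial k] (n a b : ℕ) (hn : 0 < n)
    (hab : n < a + b) :
    ¬ LinearIndependent k fun P : PartitionDiagram a b => TP k n P := by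
  classical
  letI : LocallyFiniteOrder (PartitionDiagram a b) := Fintype.toLocallyFiniteOrder
  intro hli
  -- the fiber partition of a function `h : Fin a ⊕ Fin b → Fin n`
  set Q : (Fin a ⊕ Fin b → Fin n) → PartitionDiagram a b :=
    fun h => Finpartition.ofSetoid (Setoid.ker h) with hQdef
  have hker : ∀ (h : Fin a ⊕ Fin b → Fin n) (x y : Fin a ⊕ Fin b),
      (Setoid.ker h).r x y ↔ h x = h y := fun h x y => Iff.rfl
  have compat_iff : ∀ (P : PartitionDiagram a b) (f : Fin a → Fin n) (g : Fin b → Fin n),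
      Compatible P f g ↔ P ≤ Q (Sum.elim f g) := by
    intro P f g
    constructor
    · intro hc B hB
      obtain ⟨x, hx⟩ := P.nonempty_of_mem_parts hB
      refine ⟨(Q (Sum.elim f g)).part x, (Finpartition.part_mem _).mpr (Finset.mem_univ x), ?_⟩
      intro y hy
      rw [Finpartition.mem_part_ofSetoid_iff_rel]
      exact (hc B hB x hx y hy)
    · intro hle B hB x hx y hy
      obtain ⟨C, hC, hBC⟩ := hle hB
      have hxC := hBC hx
      have hyC := hBC hy
      have hCx : (Q (Sum.elim f g)).part x = C := Finpartition.part_eq_of_mem _ hC hxC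
      have : y ∈ (Q (Sum.elim f g)).part x := hCx ▸ hyC
      exact (Finpartition.mem_part_ofSetoid_iff_rel).1 this
  have Qne : ∀ h : Fin a ⊕ Fin b → Fin n, Q h ≠ ⊥ := by
    intro h hbot
    have hinj : Function.Injective h := by
      intro x y hxy
      have hy : y ∈ (Q h).part x := by
        rw [Finpartition.mem_part_ofSetoid_iff_rel]; exact hxy
      have hsx : ({x} : Finset (Fin a ⊕ Fin b)) ∈ (⊥ : PartitionDiagram a b).parts := by
        rw [Finpartition.mem_bot_iff]; exact ⟨x, Finset.mem_univ x, rfl⟩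
      have : (⊥ : PartitionDiagram a b).part x = {x} :=
        Finpartition.part_eq_of_mem _ hsx (Finset.mem_singleton_self x)
      rw [hbot, this, Finset.mem_singleton] at hy
      exact hy.symm
    have := Fintype.card_le_of_injective h hinj
    simp [Fintype.card_sum] at this
    omega
  -- the linear dependence given by the Möbius function
  have hsum : ∑ P : PartitionDiagram a b, mu k ⊥ P • TP k n P = 0 := by
    apply LinearMap.ext
    intro x
    funext g'
    have : (∑ P : PartitionDiagram a b, mu k ⊥ P • TP k n P) x g'
        = ∑ P : PartitionDiagram a b, mu k ⊥ P * (TP k n P x g') := by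
      rw [LinearMap.sum_apply, Finset.sum_apply]
      simp [LinearMap.smul_apply]
    rw [this]
    have hTP : ∀ P : PartitionDiagram a b,
        TP k n P x g' = ∑ f : Fin a → Fin n, if Compatible P f g' then x f else 0 := by
      intro P; rfl
    simp only [hTP, Finset.mul_sum]
    rw [Finset.sum_comm]
    have : ∀ f : Fin a → Fin n,
        (∑ P : PartitionDiagram a b, mu k ⊥ P * (if Compatible P f g' then x f else 0)) = 0 := by
      intro f
      have h1 : ∀ P : PartitionDiagram a b,
          mu k ⊥ P * (if Compatible P f g' then x f else 0)
            = if P ∈ Finset.Iic (Q (Sum.elim f g')) then mu k ⊥ P * x f else 0 := by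
        intro P
        by_cases hc : Compatible P f g'
        · rw [if_pos hc, if_pos (Finset.mem_Iic.mpr ((compat_iff P f g').mp hc))]
        · rw [if_neg hc, if_neg (fun hm => hc ((compat_iff P f g').mpr (Finset.mem_Iic.mp hm))),
            mul_zero]
      simp only [h1]
      rw [Finset.sum_ite_mem, Finset.univ_inter, ← Finset.sum_mul, Finset.Iic_eq_Icc,
        sum_Icc_mu_right]
      rw [if_neg (fun hh => Qne (Sum.elim f g') hh.symm), zero_mul]
    simp only [this, Finset.sum_const_zero, LinearMap.zero_apply, Pi.zero_apply]
  have := Fintype.linearIndependent_iff.mp hli (fun P => mu k ⊥ P) hsum ⊥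
  rw [mu_self] at this
  exact one_ne_zero this
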